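/- Let Q = {1,…,n} with n ≥ 3, Q' = Q ∖ {n−1, n}, Q'' = Q ∖ {1, n}. The semigroup W_bf(n) = {t : Q → Q such that 1 ∉ rng(t), (n−1)t = nt = n, and for all distinct i,j either it = jt = n or it ≠ jt} is generated by its subset G = {t ∈ W_bf(n) : t restricted to Q' is a bijection from Q' onto Q''}. -/

import Mathlib

/-- `t` belongs to `W_bf(n)`: states `{1,…,n}` are encoded as `Fin n` (state `i` ↦ index
`i-1`); `1 ∉ rng t`, `(n-1) t = n t = n`, and for all distinct `i, j` either
`i t = j t = n` or `i t ≠ j t`. -/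
def IsWbf (n : ℕ) (t : Fin n → Fin n) : Prop :=
  (∀ q : Fin n, (t q).val ≠ 0) ∧
  (∀ q : Fin n, q.val = n - 2 ∨ q.val = n - 1 → (t q).val = n - 1) ∧
  (∀ i j : Fin n, i ≠ j →
    ((t i).val = n - 1 ∧ (t j).val = n - 1) ∨ t i ≠ t j)

private lemma wbf_mul {n : ℕ} {s t : Function.End (Fin n)} (hs : IsWbf n s) (ht : IsWbf n t) :
    IsWbf n (s * t) := by
  obtain ⟨hs1, hs2, hs3⟩ := hs
  obtain ⟨ht1, ht2, ht3⟩ := ht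
  refine ⟨fun q => hs1 (t q), fun q hq => hs2 (t q) (Or.inr (ht2 q hq)), fun i j hij => ?_⟩
  rcases ht3 i j hij with ⟨h1, h2⟩ | hne
  · exact Or.inl ⟨hs2 _ (Or.inr h1), hs2 _ (Or.inr h2)⟩
  · rcases hs3 (t i) (t j) hne with h | h
    · exact Or.inl h
    · exact Or.inr h

private lemma card_filter_val_lt (n m : ℕ) (hm : m ≤ n) :
    (Finset.univ.filter (fun q : Fin n => q.val < m)).card = m := by
  induction m with
  | zero => simp
  | succ m ih =>
    have h1 : (Finset.univ.filter (fun q : Fin n => q.val < m + 1))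
        = insert ⟨m, by omega⟩ (Finset.univ.filter (fun q : Fin n => q.val < m)) := by
      ext q
      simp only [Finset.mem_insert, Finset.mem_filter, Finset.mem_univ, true_and]
      constructor
      · intro h
        rcases Nat.lt_succ_iff_lt_or_eq.mp h with h | h
        · exact Or.inr h
        · exact Or.inl (Fin.ext h)
      · rintro (rfl | h)
        · simp
        · omega
    rw [h1, Finset.card_insert_of_notMem (by simp), ih (by omega)]

private def bmap (n : ℕ) (hn : 3 ≤ n) (q0 : Fin n) (h0 : q0.val < n - 2) : Function.End (Fin n) :=
  fun q =>
    if h : n - 2 ≤ q.val then ⟨n - 1, by omega⟩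
    else if q.val = q0.val then ⟨n - 2, by omega⟩
    else if q.val = n - 3 then ⟨q0.val + 1, by omega⟩
    else ⟨q.val + 1, by omega⟩

private def amap (n : ℕ) (hn : 3 ≤ n) (q0 : Fin n) (h0 : q0.val < n - 2) (v : Fin n)
    (t : Fin n → Fin n) : Function.End (Fin n) :=
  fun x =>
    if x.val = 0 then v
    else if x.val = n - 1 then ⟨n - 1, by omega⟩
    else if x.val = n - 2 then ⟨n - 1, by omega⟩
    else if x.val = q0.val + 1 then t ⟨n - 3, by omega⟩
    else t ⟨x.val - 1, Nat.lt_of_le_of_lt (Nat.sub_le _ _) x.isLt⟩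

section
variable {n : ℕ} (hn : 3 ≤ n)

private lemma bmap_injOn (q0 : Fin n) (h0 : q0.val < n - 2) :
    ∀ i j : Fin n, i.val < n - 2 → j.val < n - 2 →
      bmap n hn q0 h0 i = bmap n hn q0 h0 j → i = j := by
  intro i j hi hj hbij
  simp only [bmap] at hbij
  split_ifs at hbij <;> simp only [Fin.mk.injEq] at hbij <;> exact Fin.ext (by omega)

private lemma bmap_lt (q0 : Fin n) (h0 : q0.val < n - 2) :
    ∀ q : Fin n, q.val < n - 2 →
      1 ≤ (bmap n hn q0 h0 q).val ∧ (bmap n hn q0 h0 q).val ≤ n - 2 := by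
  intro q hq
  simp only [bmap]
  split_ifs <;> constructor <;> simp only [Fin.val_mk] <;> omega

private lemma bmap_high (q0 : Fin n) (h0 : q0.val < n - 2) :
    ∀ q : Fin n, n - 2 ≤ q.val → bmap n hn q0 h0 q = ⟨n - 1, by omega⟩ := by
  intro q hq
  simp only [bmap]
  rw [dif_pos hq]

private lemma bmap_lt2 (q0 : Fin n) (h0 : q0.val < n - 2) :
    ∀ q : Fin n, q.val < n - 2 → q.val ≠ q0.val → (bmap n hn q0 h0 q).val < n - 2 := by
  intro q h1 h2
  simp only [bmap]
  rw [dif_neg (by omega), if_neg h2]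
  split_ifs with h3
  · show q0.val + 1 < n - 2
    omega
  · show q.val + 1 < n - 2
    omega

private lemma bmap_wbf (q0 : Fin n) (h0 : q0.val < n - 2) :
    IsWbf n (bmap n hn q0 h0) := by
  refine ⟨?_, ?_, ?_⟩
  · intro q
    rcases lt_or_ge q.val (n - 2) with h | h
    · have := bmap_lt hn q0 h0 q h
      omega
    · rw [bmap_high hn q0 h0 q h]
      show n - 1 ≠ 0
      omega
  · intro q hq
    rw [bmap_high hn q0 h0 q (by omega)]
  · intro i j hij
    rcases lt_or_ge i.val (n - 2) with hi | hi <;> rcases lt_or_ge j.val (n - 2) with hj | hj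
    · exact Or.inr fun h => hij (bmap_injOn hn q0 h0 i j hi hj h)
    · refine Or.inr fun h => ?_
      have h1 := bmap_lt hn q0 h0 i hi
      rw [bmap_high hn q0 h0 j hj] at h
      have := congrArg Fin.val h
      simp only at this
      omega
    · refine Or.inr fun h => ?_
      have h1 := bmap_lt hn q0 h0 j hj
      rw [bmap_high hn q0 h0 i hi] at h
      have := congrArg Fin.val h
      simp only at this
      omega
    · rw [bmap_high hn q0 h0 i hi, bmap_high hn q0 h0 j hj]
      exact Or.inl ⟨rfl, rfl⟩

private lemma bmap_bijOn (q0 : Fin n) (h0 : q0.val < n - 2) :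
    Set.BijOn (bmap n hn q0 h0) {q : Fin n | q.val ≠ n - 2 ∧ q.val ≠ n - 1}
      {q : Fin n | q.val ≠ 0 ∧ q.val ≠ n - 1} := by
  refine ⟨?_, ?_, ?_⟩
  · intro q hq
    obtain ⟨hq1, hq2⟩ := hq
    have hqn := q.isLt
    have := bmap_lt hn q0 h0 q (by omega)
    exact ⟨by omega, by omega⟩
  · intro i hi j hj hEq
    have hin := i.isLt
    have hjn := j.isLt
    exact bmap_injOn hn q0 h0 i j (by obtain ⟨a, b⟩ := hi; omega)
      (by obtain ⟨a, b⟩ := hj; omega) hEq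
  · intro y hy
    obtain ⟨hy1, hy2⟩ := hy
    have hyn := y.isLt
    rcases eq_or_ne y.val (n - 2) with h | h
    · refine ⟨q0, ⟨by omega, by omega⟩, ?_⟩
      simp only [bmap, Fin.val_mk]
      split_ifs <;> exact Fin.ext (by simp only [Fin.val_mk]; omega)
    · rcases eq_or_ne y.val (q0.val + 1) with h2 | h2
      · refine ⟨⟨n - 3, by omega⟩, ⟨by simp only [Fin.val_mk]; omega,
          by simp only [Fin.val_mk]; omega⟩, ?_⟩
        simp only [bmap, Fin.val_mk]
        split_ifs <;> exact Fin.ext (by simp only [Fin.val_mk]; omega)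
      · refine ⟨⟨y.val - 1, by omega⟩, ⟨by simp only [Fin.val_mk]; omega,
          by simp only [Fin.val_mk]; omega⟩, ?_⟩
        simp only [bmap, Fin.val_mk]
        split_ifs <;> exact Fin.ext (by simp only [Fin.val_mk]; omega)

end

private instance decPredEndEq {n : ℕ} (t : Function.End (Fin n)) (c : Fin n) :
    DecidablePred (fun q : Fin n => q.val < n - 2 ∧ t q = c) :=
  fun q => @instDecidableAnd _ _ (Nat.decLt _ _) (instDecidableEqFin n (t q) c)

section
variable {n : ℕ} (hn : 3 ≤ n) (q0 : Fin n) (h0 : q0.val < n - 2) (v : Fin n)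
  (t : Fin n → Fin n)

private lemma amap_eq0 (x : Fin n) (hx : x.val = 0) : amap n hn q0 h0 v t x = v := by
  simp only [amap]; rw [if_pos hx]

private lemma amap_eqL (x : Fin n) (hx : x.val = n - 1 ∨ x.val = n - 2) :
    amap n hn q0 h0 v t x = ⟨n - 1, by omega⟩ := by
  simp only [amap]
  rcases hx with hx | hx
  · rw [if_neg (by omega), if_pos hx]
  · rw [if_neg (by omega), if_neg (by omega), if_pos hx]

private lemma amap_eq3 (x : Fin n) (hx : x.val = q0.val + 1) (h2 : x.val ≠ n - 2) :
    amap n hn q0 h0 v t x = t ⟨n - 3, by omega⟩ := by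
  simp only [amap]
  rw [if_neg (by omega), if_neg (by omega), if_neg h2, if_pos hx]

private lemma amap_else (x : Fin n) (hx0 : x.val ≠ 0) (hx1 : x.val ≠ n - 1)
    (hx2 : x.val ≠ n - 2) (hx3 : x.val ≠ q0.val + 1) :
    amap n hn q0 h0 v t x = t ⟨x.val - 1, Nat.lt_of_le_of_lt (Nat.sub_le _ _) x.isLt⟩ := by
  simp only [amap]
  rw [if_neg hx0, if_neg hx1, if_neg hx2, if_neg hx3]

set_option maxHeartbeats 1000000 in
private lemma amap_comp_bmap
    (ht2 : ∀ q : Fin n, q.val = n - 2 ∨ q.val = n - 1 → (t q).val = n - 1)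
    (htq0 : t q0 = ⟨n - 1, by omega⟩) :
    ∀ q : Fin n, amap n hn q0 h0 v t (bmap n hn q0 h0 q) = t q := by
  intro q
  have hqn := q.isLt
  by_cases hql : n - 2 ≤ q.val
  · have hb : bmap n hn q0 h0 q = ⟨n - 1, by omega⟩ := by
      simp only [bmap]; rw [dif_pos hql]
    rw [hb, amap_eqL hn q0 h0 v t _ (Or.inl (by simp only [Fin.val_mk]))]
    exact (Fin.ext (ht2 q (by omega))).symm
  · by_cases hq1 : q.val = q0.val
    · have hb : bmap n hn q0 h0 q = ⟨n - 2, by omega⟩ := by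
        simp only [bmap]; rw [dif_neg hql, if_pos hq1]
      rw [hb, amap_eqL hn q0 h0 v t _ (Or.inr (by simp only [Fin.val_mk]))]
      rw [show q = q0 from Fin.ext hq1, htq0]
    · by_cases hq3 : q.val = n - 3
      · have hb : bmap n hn q0 h0 q = ⟨q0.val + 1, by omega⟩ := by
          simp only [bmap]; rw [dif_neg hql, if_neg hq1, if_pos hq3]
        rw [hb, amap_eq3 hn q0 h0 v t _ (by simp only [Fin.val_mk])
          (by (try simp only [Fin.val_mk]); omega)]
        exact congrArg t (Fin.ext (by (try simp only [Fin.val_mk]); omega))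
      · have hb : bmap n hn q0 h0 q = ⟨q.val + 1, by omega⟩ := by
          simp only [bmap]; rw [dif_neg hql, if_neg hq1, if_neg hq3]
        rw [hb, amap_else hn q0 h0 v t _ (by (try simp only [Fin.val_mk]); omega)
          (by (try simp only [Fin.val_mk]); omega) (by (try simp only [Fin.val_mk]); omega)
          (by (try simp only [Fin.val_mk]); omega)]
        exact congrArg t (Fin.ext (by (try simp only [Fin.val_mk]); omega))

private lemma amap_wbf (ht : IsWbf n t)
    (hv0 : v.val ≠ 0) (hvf : ∀ q : Fin n, q.val < n - 2 → t q ≠ v) :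
    IsWbf n (amap n hn q0 h0 v t) := by
  have hkey : ∀ i j : Fin n, i ≠ j → amap n hn q0 h0 v t i = amap n hn q0 h0 v t j →
      (amap n hn q0 h0 v t i).val = n - 1 := by
    intro i j hij hEq
    have hi := i.isLt
    have hj := j.isLt
    have hvij : i.val ≠ j.val := fun h => hij (Fin.ext h)
    have hT : ∀ a b : Fin n, a.val ≠ b.val → t a = t b → (t a).val = n - 1 :=
      fun a b hab h =>
        ((ht.2.2 a b (Fin.ne_of_val_ne hab)).resolve_right (fun hne => hne h)).1
    simp only [amap] at hEq ⊢
    split_ifs at hEq ⊢ <;>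
      first
        | simp only [Fin.val_mk]
        | exact absurd (show i.val = j.val by omega) hvij
        | (simpa [Fin.val_mk] using congrArg Fin.val hEq)
        | exact absurd hEq.symm (hvf _ (by (try simp only [Fin.val_mk]); omega))
        | exact absurd hEq (hvf _ (by (try simp only [Fin.val_mk]); omega))
        | exact hT _ _ (by (try simp only [Fin.val_mk]); omega) hEq
  refine ⟨?_, ?_, ?_⟩
  · intro x
    simp only [amap]
    split_ifs <;> first | exact hv0 | exact (show n - 1 ≠ 0 by omega) | exact ht.1 _
  · intro x hx
    rw [amap_eqL hn q0 h0 v t x hx.symm]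
  · intro i j hij
    by_cases h : amap n hn q0 h0 v t i = amap n hn q0 h0 v t j
    · refine Or.inl ⟨hkey i j hij h, ?_⟩
      rw [← h]
      exact hkey i j hij h
    · exact Or.inr h

private lemma amap_card (ht : IsWbf n t) (htq0 : t q0 = ⟨n - 1, by omega⟩)
    (hvL : v ≠ ⟨n - 1, by omega⟩) :
    (Finset.univ.filter (fun q : Fin n =>
        q.val < n - 2 ∧ amap n hn q0 h0 v t q = (⟨n - 1, by omega⟩ : Fin n))).card
      = (Finset.univ.filter (fun q : Fin n =>
        q.val < n - 2 ∧ t q = ⟨n - 1, by omega⟩)).card - 1 := by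
  have hbinj : ∀ i j : Fin n, i.val < n - 2 → j.val < n - 2 →
      bmap n hn q0 h0 i = bmap n hn q0 h0 j → i = j := by
    intro i j hi hj hbij
    simp only [bmap] at hbij
    split_ifs at hbij <;> simp only [Fin.mk.injEq] at hbij <;> exact Fin.ext (by omega)
  have himg : (Finset.univ.filter (fun q : Fin n =>
        q.val < n - 2 ∧ amap n hn q0 h0 v t q = (⟨n - 1, by omega⟩ : Fin n)))
      = ((Finset.univ.filter (fun q : Fin n =>
        q.val < n - 2 ∧ t q = ⟨n - 1, by omega⟩)).erase q0).image (fun q => bmap n hn q0 h0 q) := by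
    ext x
    simp only [Finset.mem_filter, Finset.mem_image, Finset.mem_erase, Finset.mem_univ, true_and]
    constructor
    · rintro ⟨hx1, hax⟩
      simp only [amap] at hax
      split_ifs at hax with h1 h2 h3 h4
      · exact absurd hax hvL
      · exact absurd hx1 (by omega)
      · exact absurd hx1 (by omega)
      · -- x.val = q0.val + 1
        refine ⟨⟨n - 3, by omega⟩, ⟨?_, by (try simp only [Fin.val_mk]); omega, hax⟩, ?_⟩
        · intro hcon
          have := congrArg Fin.val hcon
          simp only [Fin.val_mk] at this
          omega
        · simp only [bmap, Fin.val_mk]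
          split_ifs <;> exact Fin.ext (by (try simp only [Fin.val_mk]); omega)
      · -- else
        have hxn := x.isLt
        refine ⟨⟨x.val - 1, by omega⟩, ⟨?_, by (try simp only [Fin.val_mk]); omega, hax⟩, ?_⟩
        · intro hcon
          have := congrArg Fin.val hcon
          simp only [Fin.val_mk] at this
          omega
        · simp only [bmap, Fin.val_mk]
          split_ifs <;> exact Fin.ext (by (try simp only [Fin.val_mk]); omega)
    · rintro ⟨q, ⟨hq0ne, hqlt, hqL⟩, rfl⟩
      have hqv : q.val ≠ q0.val := fun h => hq0ne (Fin.ext h)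
      constructor
      · simp only [bmap]
        rw [dif_neg (by omega), if_neg hqv]
        split_ifs with h3 <;> simp only [Fin.val_mk] <;> omega
      · rw [amap_comp_bmap hn q0 h0 v t ht.2.1 htq0 q]
        exact hqL
  rw [himg, Finset.card_image_of_injOn (fun i hi j hj hEq => by
      simp only [Finset.coe_erase, Finset.coe_filter, Set.mem_diff, Set.mem_setOf_eq] at hi hj
      exact hbinj i j hi.1.2.1 hj.1.2.1 hEq),
    Finset.card_erase_of_mem (by
      simp only [Finset.mem_filter, Finset.mem_univ, true_and]; exact ⟨h0, htq0⟩)]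

end

set_option maxHeartbeats 2000000 in
private lemma mem_closure_aux {n : ℕ} (hn : 3 ≤ n) (k : ℕ) :
    ∀ t : Function.End (Fin n), IsWbf n t →
      (Finset.univ.filter (fun q : Fin n => q.val < n - 2 ∧ t q = (⟨n - 1, by omega⟩ : Fin n))).card = k →
      t ∈ Subsemigroup.closure
        {g : Function.End (Fin n) |
          IsWbf n g ∧
          Set.BijOn g {q : Fin n | q.val ≠ n - 2 ∧ q.val ≠ n - 1}
            {q : Fin n | q.val ≠ 0 ∧ q.val ≠ n - 1}} := by
  induction k with
  | zero =>
    intro t ht hc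
    have hnoL : ∀ q : Fin n, q.val < n - 2 → (t q).val ≠ n - 1 := by
      intro q hq hL
      have : q ∈ Finset.univ.filter
          (fun q : Fin n => q.val < n - 2 ∧ t q = (⟨n - 1, by omega⟩ : Fin n)) := by
        simp only [Finset.mem_filter, Finset.mem_univ, true_and]
        exact ⟨hq, Fin.ext hL⟩
      rw [Finset.card_eq_zero.mp hc] at this
      exact absurd this (Finset.notMem_empty q)
    refine Subsemigroup.subset_closure ⟨ht, ?_, ?_, ?_⟩
    · intro q hq
      have hqn := q.isLt
      exact ⟨ht.1 q, hnoL q (by obtain ⟨a, b⟩ := hq; omega)⟩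
    · intro i hi j hj hEq
      by_contra hne
      have hin := i.isLt
      rcases ht.2.2 i j hne with ⟨h1, _⟩ | h
      · exact hnoL i (by obtain ⟨a, b⟩ := hi; omega) h1
      · exact h hEq
    · intro y hy
      obtain ⟨hy1, hy2⟩ := hy
      have hQ''c : (Finset.univ.filter (fun q : Fin n => q.val ≠ 0 ∧ q.val ≠ n - 1)).card
          = n - 2 := by
        have he : (Finset.univ.filter (fun q : Fin n => q.val ≠ 0 ∧ q.val ≠ n - 1))
            = (Finset.univ.filter (fun q : Fin n => q.val < n - 1)).erase ⟨0, by omega⟩ := by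
          ext q
          have := q.isLt
          simp only [Finset.mem_filter, Finset.mem_univ, true_and, Finset.mem_erase,
            ne_eq, Fin.ext_iff, Fin.val_mk]
          omega
        rw [he, Finset.card_erase_of_mem (by
            simp only [Finset.mem_filter, Finset.mem_univ, true_and, Fin.val_mk]; omega),
          card_filter_val_lt n (n - 1) (by omega)]
        omega
      obtain ⟨x, hx, hxy⟩ := Finset.surj_on_of_inj_on_of_card_le
        (s := Finset.univ.filter (fun q : Fin n => q.val < n - 2))
        (t := Finset.univ.filter (fun q : Fin n => q.val ≠ 0 ∧ q.val ≠ n - 1))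
        (fun a _ => t a)
        (by
          intro a ha
          simp only [Finset.mem_filter, Finset.mem_univ, true_and] at ha ⊢
          exact ⟨ht.1 a, hnoL a ha⟩)
        (by
          intro a1 a2 ha1 ha2 hEq
          simp only [Finset.mem_filter, Finset.mem_univ, true_and] at ha1 ha2
          by_contra hne
          rcases ht.2.2 a1 a2 hne with ⟨h1, _⟩ | h
          · exact hnoL a1 ha1 h1
          · exact h hEq)
        (by rw [hQ''c, card_filter_val_lt n (n - 2) (by omega)])
        y (by simp only [Finset.mem_filter, Finset.mem_univ, true_and]; exact ⟨hy1, hy2⟩)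
      simp only [Finset.mem_filter, Finset.mem_univ, true_and] at hx
      have hxn := x.isLt
      exact ⟨x, ⟨by omega, by omega⟩, hxy.symm⟩
  | succ k ih =>
    intro t ht hc
    have hpos : 0 < (Finset.univ.filter
        (fun q : Fin n => q.val < n - 2 ∧ t q = (⟨n - 1, by omega⟩ : Fin n))).card := by omega
    obtain ⟨q0, hq0⟩ := Finset.card_pos.mp hpos
    simp only [Finset.mem_filter, Finset.mem_univ, true_and] at hq0
    obtain ⟨h0, htq0⟩ := hq0
    have hS : ∃ w : Fin n, w ∉ insert (⟨0, by omega⟩ : Fin n)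
        ((Finset.univ.filter (fun q : Fin n => q.val < n - 2)).image t) := by
      by_contra hcon
      push_neg at hcon
      have h2 := Finset.card_le_card (fun x _ => hcon x :
        (Finset.univ : Finset (Fin n)) ⊆ _)
      have h3 := Finset.card_insert_le (⟨0, by omega⟩ : Fin n)
        ((Finset.univ.filter (fun q : Fin n => q.val < n - 2)).image t)
      have h4 := Finset.card_image_le
        (s := Finset.univ.filter (fun q : Fin n => q.val < n - 2)) (f := t)
      rw [card_filter_val_lt n (n - 2) (by omega)] at h4
      rw [Finset.card_univ, Fintype.card_fin] at h2
      omega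
    obtain ⟨v, hv⟩ := hS
    have hv0 : v.val ≠ 0 := by
      intro h
      exact hv (by
        rw [show v = (⟨0, by omega⟩ : Fin n) from Fin.ext h]
        exact Finset.mem_insert_self _ _)
    have hvf : ∀ q : Fin n, q.val < n - 2 → t q ≠ v := by
      intro q hq hEq
      exact hv (Finset.mem_insert_of_mem (Finset.mem_image.mpr
        ⟨q, by simp only [Finset.mem_filter, Finset.mem_univ, true_and]; exact hq, hEq⟩))
    have hvL : v ≠ ⟨n - 1, by omega⟩ := fun h => hvf q0 h0 (htq0.trans h.symm)
    have hcomp : t = amap n hn q0 h0 v t * bmap n hn q0 h0 :=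
      funext fun q => (amap_comp_bmap hn q0 h0 v t ht.2.1 htq0 q).symm
    have haw := amap_wbf hn q0 h0 v t ht hv0 hvf
    have hacard := amap_card hn q0 h0 v t ht htq0 hvL
    rw [hc] at hacard
    have hamem := ih (amap n hn q0 h0 v t) haw (by rw [hacard]; omega)
    rw [hcomp]
    exact Subsemigroup.mul_mem _ hamem
      (Subsemigroup.subset_closure ⟨bmap_wbf hn q0 h0, bmap_bijOn hn q0 h0⟩)

/-- For `n ≥ 3`, the semigroup `W_bf(n)` (inside `Function.End (Fin n)`) is generated
by its subset of elements restricting to a bijection from `Q' = Q ∖ {n-1, n}` onto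
`Q'' = Q ∖ {1, n}`. -/
theorem statement19 (n : ℕ) (hn : 3 ≤ n) :
    ∀ t : Function.End (Fin n),
      t ∈ Subsemigroup.closure
        {g : Function.End (Fin n) |
          IsWbf n g ∧
          Set.BijOn g {q : Fin n | q.val ≠ n - 2 ∧ q.val ≠ n - 1}
            {q : Fin n | q.val ≠ 0 ∧ q.val ≠ n - 1}} ↔
      IsWbf n t := by
  intro t
  constructor
  · intro h
    exact Subsemigroup.closure_le (S :=
      { carrier := {t : Function.End (Fin n) | IsWbf n t}
        mul_mem' := fun ha hb => wbf_mul ha hb }).mpr (fun g hg => hg.1) h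
  · intro ht
    exact mem_closure_aux hn _ t ht rfl
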